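/- Let G be a finite group acting on a simplicial space X_* (i.e., G acts continuously on each level X_n and the actions commute with all face and degeneracy maps), and suppose each X_n is Hausdorff. Then for every subgroup H ≤ G, the natural map |X_*^H| → |X_*|^H is a homeomorphism, where X_*^H is the simplicial space of levelwise H-fixed points and |X_*|^H is the H-fixed-point subspace of the realization under the induced G-action. -/

import Mathlib

noncomputable section

universe u

open scoped Topology
open CategoryTheory CategoryTheory.Limits Opposite Simplicial

/-- The topological simplex `{f : Fin (x.len + 1) → ℝ≥0 | ∑ i, f i = 1}` (the definition of
`SimplexCategory.toTopObj` in the older Mathlib, which no longer has it). -/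
def SimplexCategory.toTopObj (x : SimplexCategory) : Set (Fin (x.len + 1) → NNReal) :=
  { f | ∑ i, f i = 1 }

/-- The map of topological simplices induced by a morphism of `SimplexCategory` (the definition of
`SimplexCategory.toTopMap` in the older Mathlib). -/
def SimplexCategory.toTopMap {x y : SimplexCategory} (f : x ⟶ y) (g : x.toTopObj) :
    y.toTopObj :=
  ⟨fun i => ∑ j ∈ Finset.univ.filter (f.toOrderHom · = i), g.1 j, by
    simp only [SimplexCategory.toTopObj, Set.mem_ofPred_eq]
    rw [← Finset.sum_biUnion]
    · have hg : ∑ i : Fin (x.len + 1), g.1 i = 1 := g.2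
      convert hg
      simp [Finset.eq_univ_iff_forall]
    · convert Set.pairwiseDisjoint_filter _ _ _⟩


/-- The total space `∐ₙ Wₙ × Δⁿ` from which the geometric realization of a simplicial
space `W` is built. -/
def GeomRealPre (W : SimplicialObject TopCat.{u}) : Type u :=
  Σ n : SimplexCategory, W.obj (op n) × n.toTopObj

instance (W : SimplicialObject TopCat.{u}) : TopologicalSpace (GeomRealPre W) :=
  inferInstanceAs (TopologicalSpace (Σ n : SimplexCategory, W.obj (op n) × n.toTopObj))

/-- The relation `(θ* x, t) ∼ (x, θ_* t)` generating the identifications made in the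
geometric realization of a simplicial space. -/
def GeomRealRel (W : SimplicialObject TopCat.{u}) : GeomRealPre W → GeomRealPre W → Prop :=
  fun p q => ∃ θ : p.1 ⟶ q.1,
    p.2.1 = W.map θ.op q.2.1 ∧ q.2.2 = SimplexCategory.toTopMap θ p.2.2

/-- The geometric realization `|W| = (∐ₙ Wₙ × Δⁿ)/∼` of a simplicial space `W`,
where `(θ* x, t) ∼ (x, θ_* t)` for all morphisms `θ` of the simplex category. -/
def GeomReal (W : SimplicialObject TopCat.{u}) : Type u :=
  Quot (GeomRealRel W)

instance (W : SimplicialObject TopCat.{u}) : TopologicalSpace (GeomReal W) :=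
  inferInstanceAs (TopologicalSpace (Quot (GeomRealRel W)))

/-- The point of the geometric realization determined by a point of `Wₙ × Δⁿ`. -/
def GeomReal.mk (W : SimplicialObject TopCat.{u}) {n : SimplexCategory}
    (x : W.obj (op n)) (t : n.toTopObj) : GeomReal W :=
  Quot.mk _ ⟨n, x, t⟩

/-- The continuous map of geometric realizations induced by a map of simplicial spaces. -/
def GeomReal.map {W V : SimplicialObject TopCat.{u}} (f : W ⟶ V) :
    C(GeomReal W, GeomReal V) where
  toFun := Quot.lift (fun p => GeomReal.mk V (f.app (op p.1) p.2.1) p.2.2)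
    (by
      rintro ⟨m, x, t⟩ ⟨n, y, s⟩ ⟨θ, h1, h2⟩
      dsimp at h1 h2 ⊢
      apply Quot.sound
      refine ⟨θ, ?_, h2⟩
      dsimp
      rw [h1]
      exact ConcreteCategory.congr_hom (f.naturality θ.op) y)
  continuous_toFun := by
    apply continuous_quot_lift
    apply continuous_sigma
    intro n
    have h1 : Continuous fun xt : W.obj (op n) × n.toTopObj =>
        (⟨n, f.app (op n) xt.1, xt.2⟩ : GeomRealPre V) :=
      continuous_sigmaMk.comp ((f.app (op n)).hom.continuous.prodMap continuous_id)
    exact continuous_quot_mk.comp h1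

/-- The continuous map `|W| → X` induced by an augmentation `W ⟶ cX` to the constant
simplicial space at `X`. -/
def GeomReal.toAug {W : SimplicialObject TopCat.{u}} {X : TopCat.{u}}
    (e : W ⟶ (Functor.const _).obj X) : C(GeomReal W, X) where
  toFun := Quot.lift (fun p => e.app (op p.1) p.2.1)
    (by
      rintro ⟨m, x, t⟩ ⟨n, y, s⟩ ⟨θ, h1, h2⟩
      dsimp at h1 ⊢
      rw [h1]
      exact ConcreteCategory.congr_hom (e.naturality θ.op) y)
  continuous_toFun := by
    apply continuous_quot_lift
    apply continuous_sigma
    intro n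
    exact (e.app (op n)).hom.continuous.comp continuous_fst

namespace GRAux
open SimplexCategory

instance homFinite (a b : SimplexCategory) : Finite (a ⟶ b) := by
  apply Finite.of_injective
    (fun f : a ⟶ b => (fun i => f.toOrderHom i : Fin (a.len + 1) → Fin (b.len + 1)))
  intro f g h
  apply SimplexCategory.Hom.ext
  ext i
  exact congrArg Fin.val (congrFun h i)

instance lenLeFinite (L : ℕ) : Finite {k : SimplexCategory // k.len ≤ L} := by
  apply Finite.of_injective
    (fun k : {k : SimplexCategory // k.len ≤ L} => (⟨k.1.len, Nat.lt_succ_of_le k.2⟩ : Fin (L + 1)))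
  intro k k' h
  exact Subtype.ext (SimplexCategory.ext (congrArg Fin.val h))

lemma toOrderHom_comp_apply {a b c : SimplexCategory} (φ : a ⟶ b) (ψ : b ⟶ c)
    (i : Fin (a.len + 1)) : (φ ≫ ψ).toOrderHom i = ψ.toOrderHom (φ.toOrderHom i) := rfl

/-! ### sections of epimorphisms -/

def fiber {a b : SimplexCategory} (τ : a ⟶ b) (j : Fin (b.len + 1)) : Finset (Fin (a.len + 1)) :=
  Finset.univ.filter (fun i => τ.toOrderHom i = j)

lemma fiber_nonempty {a b : SimplexCategory} (τ : a ⟶ b)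
    (hs : Function.Surjective τ.toOrderHom) (j : Fin (b.len + 1)) : (fiber τ j).Nonempty := by
  obtain ⟨i, hi⟩ := hs j
  exact ⟨i, by simp [fiber, hi]⟩

def minSection {a b : SimplexCategory} (τ : a ⟶ b) (hs : Function.Surjective τ.toOrderHom) :
    b ⟶ a :=
  SimplexCategory.Hom.mk
    { toFun := fun j => (fiber τ j).min' (fiber_nonempty τ hs j)
      monotone' := by
        intro j j' hjj
        by_contra hlt
        push_neg at hlt
        have h1 : τ.toOrderHom ((fiber τ j').min' (fiber_nonempty τ hs j')) = j' := by
          have := Finset.min'_mem (fiber τ j') (fiber_nonempty τ hs j')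
          simpa [fiber] using this
        have h2 : τ.toOrderHom ((fiber τ j).min' (fiber_nonempty τ hs j)) = j := by
          have := Finset.min'_mem (fiber τ j) (fiber_nonempty τ hs j)
          simpa [fiber] using this
        have h3 := τ.toOrderHom.monotone (le_of_lt hlt)
        rw [h1, h2] at h3
        have hj : j = j' := le_antisymm hjj h3
        subst hj
        exact lt_irrefl _ hlt }

def maxSection {a b : SimplexCategory} (τ : a ⟶ b) (hs : Function.Surjective τ.toOrderHom) :
    b ⟶ a :=
  SimplexCategory.Hom.mk
    { toFun := fun j => (fiber τ j).max' (fiber_nonempty τ hs j)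
      monotone' := by
        intro j j' hjj
        by_contra hlt
        push_neg at hlt
        have h1 : τ.toOrderHom ((fiber τ j').max' (fiber_nonempty τ hs j')) = j' := by
          have := Finset.max'_mem (fiber τ j') (fiber_nonempty τ hs j')
          simpa [fiber] using this
        have h2 : τ.toOrderHom ((fiber τ j).max' (fiber_nonempty τ hs j)) = j := by
          have := Finset.max'_mem (fiber τ j) (fiber_nonempty τ hs j)
          simpa [fiber] using this
        have h3 := τ.toOrderHom.monotone (le_of_lt hlt)
        rw [h1, h2] at h3
        have hj : j = j' := le_antisymm hjj h3
        subst hj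
        exact lt_irrefl _ hlt }

lemma minSection_comp {a b : SimplexCategory} (τ : a ⟶ b)
    (hs : Function.Surjective τ.toOrderHom) : minSection τ hs ≫ τ = 𝟙 b := by
  apply SimplexCategory.Hom.ext
  ext j
  have := Finset.min'_mem (fiber τ j) (fiber_nonempty τ hs j)
  simp only [fiber, Finset.mem_filter] at this
  exact congrArg Fin.val this.2

lemma maxSection_comp {a b : SimplexCategory} (τ : a ⟶ b)
    (hs : Function.Surjective τ.toOrderHom) : maxSection τ hs ≫ τ = 𝟙 b := by
  apply SimplexCategory.Hom.ext
  ext j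
  have := Finset.max'_mem (fiber τ j) (fiber_nonempty τ hs j)
  simp only [fiber, Finset.mem_filter] at this
  exact congrArg Fin.val this.2

lemma minSection_le {a b : SimplexCategory} (τ : a ⟶ b)
    (hs : Function.Surjective τ.toOrderHom) (i : Fin (a.len + 1)) :
    (minSection τ hs).toOrderHom (τ.toOrderHom i) ≤ i :=
  Finset.min'_le _ _ (by simp [fiber])

lemma le_maxSection {a b : SimplexCategory} (τ : a ⟶ b)
    (hs : Function.Surjective τ.toOrderHom) (i : Fin (a.len + 1)) :
    i ≤ (maxSection τ hs).toOrderHom (τ.toOrderHom i) :=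
  Finset.le_max' _ _ (by simp [fiber])

lemma epi_ext {a b : SimplexCategory} (τ τ' : a ⟶ b)
    (hs : Function.Surjective τ.toOrderHom)
    (hmin : minSection τ hs ≫ τ' = 𝟙 b) (hmax : maxSection τ hs ≫ τ' = 𝟙 b) : τ' = τ := by
  apply SimplexCategory.Hom.ext
  ext i
  have h1 : τ'.toOrderHom ((minSection τ hs).toOrderHom (τ.toOrderHom i)) = τ.toOrderHom i := by
    have := congrArg (fun f => Hom.toOrderHom f (τ.toOrderHom i)) hmin
    simpa [toOrderHom_comp_apply] using this
  have h2 : τ'.toOrderHom ((maxSection τ hs).toOrderHom (τ.toOrderHom i)) = τ.toOrderHom i := by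
    have := congrArg (fun f => Hom.toOrderHom f (τ.toOrderHom i)) hmax
    simpa [toOrderHom_comp_apply] using this
  have l1 : τ.toOrderHom i ≤ τ'.toOrderHom i := by
    rw [← h1]; exact τ'.toOrderHom.monotone (minSection_le τ hs i)
  have l2 : τ'.toOrderHom i ≤ τ.toOrderHom i := by
    rw [← h2]; exact τ'.toOrderHom.monotone (le_maxSection τ hs i)
  exact congrArg Fin.val (le_antisymm l2 l1)

end GRAux

namespace GRAux
open SimplexCategory

variable {W : SimplicialObject TopCat.{0}}

lemma wmap_comp_apply {a b c : SimplexCategory} (φ : a ⟶ b) (ψ : b ⟶ c) (z : W.obj (op c)) :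
    W.map (φ ≫ ψ).op z = W.map φ.op (W.map ψ.op z) := by
  rw [op_comp, W.map_comp]
  rfl

lemma wmap_id_apply {a : SimplexCategory} (z : W.obj (op a)) : W.map (𝟙 a).op z = z := by
  rw [op_id, W.map_id]
  rfl

lemma toTopMap_comp_apply {a b c : SimplexCategory} (φ : a ⟶ b) (ψ : b ⟶ c) (t : a.toTopObj) :
    toTopMap (φ ≫ ψ) t = toTopMap ψ (toTopMap φ t) := by
  classical
  apply Subtype.ext
  funext k
  show ∑ i ∈ Finset.univ.filter (fun i => (φ ≫ ψ).toOrderHom i = k), t.1 i =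
    ∑ j ∈ Finset.univ.filter (fun j => ψ.toOrderHom j = k),
      ∑ i ∈ Finset.univ.filter (fun i => φ.toOrderHom i = j), t.1 i
  rw [← Finset.sum_biUnion]
  · congr 1
    ext i
    simp
  · intro j _ j' _ hjj
    simp only [Function.onFun]
    rw [Finset.disjoint_filter]
    intro i _ h1 h2
    exact hjj (h1.symm.trans h2)

lemma continuous_toTopMap' {x y : SimplexCategory} (f : x ⟶ y) :
    Continuous (SimplexCategory.toTopMap f) :=
  Continuous.subtype_mk (continuous_pi fun _ => continuous_finset_sum _ fun j _ =>
    (continuous_apply j).comp continuous_subtype_val) _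

lemma toTopMap_apply' {a b : SimplexCategory} (φ : a ⟶ b) (t : a.toTopObj)
    (j : Fin (b.len + 1)) :
    (toTopMap φ t).1 j = ∑ i ∈ Finset.univ.filter (fun i => φ.toOrderHom i = j), t.1 i := by
  classical
  show (∑ i ∈ Finset.filter _ Finset.univ, t.1 i) = _
  apply Finset.sum_congr _ (fun _ _ => rfl)
  ext i
  simp only [Finset.mem_filter, Finset.mem_univ, true_and]

lemma toTopObj_sum {a : SimplexCategory} (t : a.toTopObj) : ∑ i, t.1 i = 1 := t.2

lemma toTopMap_pos {a b : SimplexCategory} (ψ : a ⟶ b) (hs : Function.Surjective ψ.toOrderHom)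
    (t : a.toTopObj) (h0 : ∀ i, t.1 i ≠ 0) (j : Fin (b.len + 1)) : (toTopMap ψ t).1 j ≠ 0 := by
  classical
  rw [toTopMap_apply']
  intro h
  rw [Finset.sum_eq_zero_iff] at h
  obtain ⟨i, hi⟩ := hs j
  exact h0 i (h i (by simp [hi]))

/-! ### interior decomposition -/

variable {n : SimplexCategory}

def suppF (t : n.toTopObj) : Finset (Fin (n.len + 1)) :=
  Finset.univ.filter (fun i => t.1 i ≠ 0)

lemma suppF_nonempty (t : n.toTopObj) : (suppF t).Nonempty := by
  by_contra h
  rw [Finset.not_nonempty_iff_eq_empty] at h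
  have h2 : ∑ i, t.1 i = 0 := by
    apply Finset.sum_eq_zero
    intro i _
    by_contra hne
    have : i ∈ suppF t := by simp [suppF, hne]
    simp [h] at this
  rw [toTopObj_sum t] at h2
  exact one_ne_zero h2

lemma suppF_hcard (t : n.toTopObj) : (suppF t).card = ((suppF t).card - 1) + 1 :=
  (Nat.succ_pred_eq_of_pos (Finset.card_pos.2 (suppF_nonempty t))).symm

def ik (t : n.toTopObj) : SimplexCategory := SimplexCategory.mk ((suppF t).card - 1)

def iembFun (t : n.toTopObj) : Fin ((ik t).len + 1) → Fin (n.len + 1) :=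
  fun i => (suppF t).orderEmbOfFin (suppF_hcard t) i

def iemb (t : n.toTopObj) : ik t ⟶ n :=
  SimplexCategory.Hom.mk ⟨iembFun t, fun _ _ h => ((suppF t).orderEmbOfFin _).monotone h⟩

lemma iemb_injective (t : n.toTopObj) : Function.Injective (iemb t).toOrderHom :=
  fun _ _ h => ((suppF t).orderEmbOfFin (suppF_hcard t)).injective h

lemma iemb_mem (t : n.toTopObj) (i : Fin ((ik t).len + 1)) : (iemb t).toOrderHom i ∈ suppF t :=
  Finset.orderEmbOfFin_mem (suppF t) (suppF_hcard t) i

def itop (t : n.toTopObj) : (ik t).toTopObj := by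
  refine ⟨fun i => t.1 ((iemb t).toOrderHom i), ?_⟩
  show ∑ i, t.1 ((iemb t).toOrderHom i) = 1
  classical
  have himg : Finset.univ.image (fun i => (iemb t).toOrderHom i) = suppF t := by
    ext j
    simp only [Finset.mem_image, Finset.mem_univ, true_and]
    constructor
    · rintro ⟨i, rfl⟩; exact iemb_mem t i
    · intro hj
      have : j ∈ Set.range ((suppF t).orderEmbOfFin (suppF_hcard t)) := by
        rw [Finset.range_orderEmbOfFin]; exact hj
      obtain ⟨i, hi⟩ := this
      exact ⟨i, hi⟩
  have h1 : ∑ j ∈ Finset.univ.image (fun i => (iemb t).toOrderHom i), t.1 j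
      = ∑ i, t.1 ((iemb t).toOrderHom i) :=
    Finset.sum_image (fun i _ i' _ h => iemb_injective t h)
  rw [← h1, himg]
  have h2 : ∑ j ∈ suppF t, t.1 j = ∑ j, t.1 j := by
    apply Finset.sum_subset (Finset.filter_subset _ _)
    intro i _ hi
    simpa [suppF] using hi
  rw [h2]
  exact toTopObj_sum t

lemma itop_pos (t : n.toTopObj) (i : Fin ((ik t).len + 1)) : (itop t).1 i ≠ 0 := by
  have := iemb_mem t i
  simp only [suppF, Finset.mem_filter] at this
  exact this.2

lemma toTopMap_iemb (t : n.toTopObj) : toTopMap (iemb t) (itop t) = t := by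
  apply Subtype.ext
  funext j
  show (toTopMap (iemb t) (itop t)).1 j = t.1 j
  classical
  rw [toTopMap_apply']
  by_cases hj : j ∈ suppF t
  · have : j ∈ Set.range ((suppF t).orderEmbOfFin (suppF_hcard t)) := by
      rw [Finset.range_orderEmbOfFin]; exact hj
    obtain ⟨i0, hi0⟩ := this
    change Fin ((ik t).len + 1) at i0
    have hfil : Finset.univ.filter (fun i => (iemb t).toOrderHom i = j) = {(i0 : Fin ((ik t).len + 1))} := by
      ext i
      simp only [Finset.mem_filter, Finset.mem_univ, true_and, Finset.mem_singleton]
      constructor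
      · intro h; exact iemb_injective t (h.trans hi0.symm)
      · rintro rfl; exact hi0
    rw [hfil, Finset.sum_singleton]
    show t.1 ((iemb t).toOrderHom i0) = t.1 j
    rw [show (iemb t).toOrderHom i0 = j from hi0]
  · have hfil : Finset.univ.filter (fun i => (iemb t).toOrderHom i = j) = ∅ := by
      ext i
      simp only [Finset.mem_filter, Finset.mem_univ, true_and, Finset.notMem_empty, iff_false]
      intro h
      exact hj (h ▸ iemb_mem t i)
    rw [hfil, Finset.sum_empty]
    have : ¬ t.1 j ≠ 0 := by
      intro h
      exact hj (by simp [suppF, h])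
    exact (not_not.mp this).symm

/-! ### mred : interior reduction -/

def mred (p : GeomRealPre W) : GeomRealPre W :=
  ⟨ik p.2.2, W.map (iemb p.2.2).op p.2.1, itop p.2.2⟩

lemma rel_mred (p : GeomRealPre W) : GeomRealRel W (mred p) p :=
  ⟨iemb p.2.2, rfl, (toTopMap_iemb p.2.2).symm⟩

lemma fiber_inj_eq {n k : SimplexCategory} (ι : k ⟶ n) (hι : Function.Injective ι.toOrderHom)
    (t0 : k.toTopObj) (i : Fin (k.len + 1)) :
    (toTopMap ι t0).1 (ι.toOrderHom i) = t0.1 i := by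
  classical
  rw [toTopMap_apply']
  have : Finset.univ.filter (fun i' => ι.toOrderHom i' = ι.toOrderHom i) = {i} := by
    ext i'
    simp only [Finset.mem_filter, Finset.mem_univ, true_and, Finset.mem_singleton]
    exact ⟨fun h => hι h, fun h => h ▸ rfl⟩
  rw [this, Finset.sum_singleton]

lemma mred_eq {n k : SimplexCategory} (ι : k ⟶ n) (hι : Function.Injective ι.toOrderHom)
    (t0 : k.toTopObj) (h0 : ∀ i, t0.1 i ≠ 0) (x : W.obj (op n)) (t : n.toTopObj)
    (hdec : t = toTopMap ι t0) :
    mred (⟨n, x, t⟩ : GeomRealPre W) = ⟨k, W.map ι.op x, t0⟩ := by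
  classical
  have hsupp : suppF t = Finset.univ.image (fun i => ι.toOrderHom i) := by
    ext j
    simp only [suppF, Finset.mem_filter, Finset.mem_univ, true_and, Finset.mem_image]
    rw [hdec, toTopMap_apply']
    constructor
    · intro h
      by_contra hc
      push_neg at hc
      apply h
      apply Finset.sum_eq_zero
      intro i hi
      simp only [Finset.mem_filter] at hi
      exact absurd hi.2 (hc i)
    · rintro ⟨i, rfl⟩
      intro h
      rw [Finset.sum_eq_zero_iff] at h
      exact h0 i (h i (by simp))
  have hcard2 : (suppF t).card = k.len + 1 := by
    rw [hsupp, Finset.card_image_of_injective _ hι, Finset.card_univ, Fintype.card_fin]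
  have hobj : ik t = k := SimplexCategory.ext (by simp [ik, hcard2])
  subst hobj
  have hval : t.1 = (toTopMap ι t0).1 := congrArg Subtype.val hdec
  have hhom : iemb t = ι := by
    have huniq := Finset.orderEmbOfFin_unique (suppF_hcard t)
      (f := fun i => ι.toOrderHom i)
      (fun i => by
        have h1 : t.1 (ι.toOrderHom i) = t0.1 i := by
          rw [hval]; exact fiber_inj_eq ι hι t0 i
        simp only [suppF, Finset.mem_filter, Finset.mem_univ, true_and]
        rw [h1]; exact h0 i)
      (ι.toOrderHom.monotone.strictMono_of_injective hι)
    apply SimplexCategory.Hom.ext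
    ext i
    exact congrArg Fin.val (congrFun huniq i).symm
  have htop : itop t = t0 := by
    apply Subtype.ext
    funext i
    show t.1 ((iemb t).toOrderHom i) = t0.1 i
    rw [hhom, hval]
    exact fiber_inj_eq ι hι t0 i
  show (⟨ik t, W.map (iemb t).op x, itop t⟩ : GeomRealPre W) = _
  rw [hhom, htop]

/-! ### Eilenberg-Zilber: epi-nondegenerate decomposition -/

def IsDeg {m : SimplexCategory} (x : W.obj (op m)) : Prop :=
  ∃ (c : SimplexCategory) (τ : m ⟶ c) (y : W.obj (op c)),
    Function.Surjective τ.toOrderHom ∧ c.len < m.len ∧ x = W.map τ.op y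

lemma nondeg_mono {m c : SimplexCategory} {x : W.obj (op m)} (hx : ¬ IsDeg x) (α : m ⟶ c)
    (z : W.obj (op c)) (h : x = W.map α.op z) :
    Function.Injective α.toOrderHom := by
  set e := Limits.factorThruImage α with he
  set ii := Limits.image.ι α with hi
  have hfac : e ≫ ii = α := Limits.image.fac α
  have hse : Function.Surjective e.toOrderHom := epi_iff_surjective.mp inferInstance
  have hxe : x = W.map e.op (W.map ii.op z) := by
    rw [← wmap_comp_apply, hfac]
    exact h
  have hlen : (Limits.image α).len = m.len := by
    refine le_antisymm (len_le_of_epi e) ?_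
    by_contra hlt
    push_neg at hlt
    exact hx ⟨Limits.image α, e, W.map ii.op z, hse, hlt, hxe⟩
  have hobj : Limits.image α = m := SimplexCategory.ext hlen
  have heid : e = eqToHom hobj.symm := by
    have : Epi (e ≫ eqToHom hobj) := by
      have : Epi e := inferInstance
      exact epi_comp _ _
    have h2 : e ≫ eqToHom hobj = 𝟙 m := eq_id_of_epi _
    calc e = (e ≫ eqToHom hobj) ≫ eqToHom hobj.symm := by
            rw [Category.assoc, eqToHom_trans, eqToHom_refl, Category.comp_id]
      _ = eqToHom hobj.symm := by rw [h2, Category.id_comp]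
  have hαi : α = eqToHom hobj.symm ≫ ii := by rw [← heid, hfac]
  rw [hαi]
  intro i1 i2 h12
  rw [toOrderHom_comp_apply, toOrderHom_comp_apply] at h12
  have hmi : Function.Injective ii.toOrderHom := mono_iff_injective.mp inferInstance
  have h13 := hmi h12
  have hiv : ∀ (j : Fin (m.len + 1)), ((eqToHom hobj.symm).toOrderHom j).val = j.val := by
    intro j
    have : ∀ {a b : SimplexCategory} (hab : a = b) (j : Fin (a.len + 1)),
        ((eqToHom hab).toOrderHom j).val = j.val := by
      rintro a b rfl j
      rw [eqToHom_refl]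
      rfl
    exact this hobj.symm j
  apply Fin.ext
  rw [← hiv i1, ← hiv i2, h13]

lemma ez_exists' : ∀ (L : ℕ) (m : SimplexCategory), m.len ≤ L → ∀ x : W.obj (op m),
    ∃ q : Σ c : SimplexCategory, (m ⟶ c) × W.obj (op c),
      Function.Surjective q.2.1.toOrderHom ∧ ¬ IsDeg q.2.2 ∧ x = W.map q.2.1.op q.2.2 := by
  intro L
  induction L with
  | zero =>
    intro m hm x
    refine ⟨⟨m, 𝟙 m, x⟩, Function.surjective_id, ?_, (wmap_id_apply x).symm⟩
    rintro ⟨c, τ, y, hs, hlt, he⟩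
    exact absurd (Nat.lt_of_lt_of_le hlt hm) (Nat.not_lt_zero _)
  | succ L ih =>
    intro m hm x
    by_cases hx : IsDeg x
    · obtain ⟨c, τ, y, hs, hlt, he⟩ := hx
      obtain ⟨⟨c', τ', y'⟩, hs', hnd', he'⟩ := ih c (by omega) y
      refine ⟨⟨c', τ ≫ τ', y'⟩, ?_, hnd', by rw [he, he', wmap_comp_apply]⟩
      intro j
      obtain ⟨i', hi'⟩ := hs' j
      obtain ⟨i, hi⟩ := hs i'
      exact ⟨i, by rw [toOrderHom_comp_apply, hi, hi']⟩
    · exact ⟨⟨m, 𝟙 m, x⟩, Function.surjective_id, hx, (wmap_id_apply x).symm⟩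

lemma ez_exists {m : SimplexCategory} (x : W.obj (op m)) :
    ∃ q : Σ c : SimplexCategory, (m ⟶ c) × W.obj (op c),
      Function.Surjective q.2.1.toOrderHom ∧ ¬ IsDeg q.2.2 ∧ x = W.map q.2.1.op q.2.2 :=
  ez_exists' m.len m le_rfl x

noncomputable def ez {m : SimplexCategory} (x : W.obj (op m)) :
    Σ c : SimplexCategory, (m ⟶ c) × W.obj (op c) :=
  (ez_exists x).choose

lemma ez_surj {m : SimplexCategory} (x : W.obj (op m)) :
    Function.Surjective (ez x).2.1.toOrderHom := (ez_exists x).choose_spec.1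

lemma ez_nondeg {m : SimplexCategory} (x : W.obj (op m)) : ¬ IsDeg (ez x).2.2 :=
  (ez_exists x).choose_spec.2.1

lemma ez_map {m : SimplexCategory} (x : W.obj (op m)) :
    x = W.map (ez x).2.1.op (ez x).2.2 := (ez_exists x).choose_spec.2.2

lemma ez_unique {m c : SimplexCategory} (x : W.obj (op m)) (τ : m ⟶ c) (y : W.obj (op c))
    (hs : Function.Surjective τ.toOrderHom) (hy : ¬ IsDeg y) (hxy : x = W.map τ.op y) :
    ez x = ⟨c, τ, y⟩ := by
  have hs0 := ez_surj x
  have hy0 := ez_nondeg x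
  have he0 := ez_map x
  rcases hq : ez x with ⟨c0, τ0, y0⟩
  rw [hq] at hs0 hy0 he0
  dsimp only at hs0 hy0 he0
  have hsec : ∀ (d : c0 ⟶ m), d ≫ τ0 = 𝟙 c0 → y0 = W.map (d ≫ τ).op y := by
    intro d hd
    have h1 : W.map d.op x = y0 := by
      rw [he0, ← wmap_comp_apply, hd, wmap_id_apply]
    rw [← h1, hxy, wmap_comp_apply]
  have hsec' : ∀ (d' : c ⟶ m), d' ≫ τ = 𝟙 c → y = W.map (d' ≫ τ0).op y0 := by
    intro d' hd'
    have h1 : W.map d'.op x = y := by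
      rw [hxy, ← wmap_comp_apply, hd', wmap_id_apply]
    rw [← h1, he0, wmap_comp_apply]
  have hlen1 : c0.len ≤ c.len := by
    have h1 := hsec (minSection _ hs0) (minSection_comp _ hs0)
    have h2 := nondeg_mono hy0 _ _ h1
    have : Mono (minSection τ0 hs0 ≫ τ) := mono_iff_injective.mpr h2
    exact len_le_of_mono (minSection τ0 hs0 ≫ τ)
  have hlen2 : c.len ≤ c0.len := by
    have h1 := hsec' (minSection _ hs) (minSection_comp _ hs)
    have h2 := nondeg_mono hy _ _ h1
    have : Mono (minSection τ hs ≫ τ0) := mono_iff_injective.mpr h2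
    exact len_le_of_mono (minSection τ hs ≫ τ0)
  have hobj : c0 = c := SimplexCategory.ext (le_antisymm hlen1 hlen2)
  subst hobj
  have hkey : ∀ (d : c0 ⟶ m), d ≫ τ0 = 𝟙 c0 → d ≫ τ = 𝟙 c0 := by
    intro d hd
    have h1 := hsec d hd
    have h2 := nondeg_mono hy0 _ _ h1
    have : Mono (d ≫ τ) := mono_iff_injective.mpr h2
    exact eq_id_of_mono _
  have hy0y : y0 = y := by
    have h1 := hsec (minSection _ hs0) (minSection_comp _ hs0)
    rw [h1, hkey _ (minSection_comp _ hs0), wmap_id_apply]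
  have hττ : τ = τ0 := by
    apply epi_ext _ _ hs0
    · exact hkey _ (minSection_comp _ hs0)
    · exact hkey _ (maxSection_comp _ hs0)
  rw [hy0y, hττ]

/-! ### the normal form -/

noncomputable def ered (q : GeomRealPre W) : GeomRealPre W :=
  ⟨(ez q.2.1).1, (ez q.2.1).2.2, toTopMap (ez q.2.1).2.1 q.2.2⟩

lemma rel_ered (q : GeomRealPre W) : GeomRealRel W q (ered q) :=
  ⟨(ez q.2.1).2.1, ez_map q.2.1, rfl⟩

noncomputable def nf (p : GeomRealPre W) : GeomRealPre W := ered (mred p)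

lemma eqvGen_nf (p : GeomRealPre W) : Relation.EqvGen (GeomRealRel W) p (nf p) :=
  .trans _ _ _ (.symm _ _ (.rel _ _ (rel_mred p))) (.rel _ _ (rel_ered (mred p)))

lemma ered_of {q : GeomRealPre W} {c : SimplexCategory} {τ : q.1 ⟶ c} {y : W.obj (op c)}
    (h : ez q.2.1 = ⟨c, τ, y⟩) : ered q = ⟨c, y, toTopMap τ q.2.2⟩ := by
  have h0 : ered q = ⟨(ez q.2.1).1, (ez q.2.1).2.2, toTopMap (ez q.2.1).2.1 q.2.2⟩ := rfl
  rw [h0, h]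

lemma mred_of_mono {p q : GeomRealPre W} (θ : p.1 ⟶ q.1)
    (hinj : Function.Injective θ.toOrderHom)
    (h1 : p.2.1 = W.map θ.op q.2.1) (h2 : q.2.2 = toTopMap θ p.2.2) : mred p = mred q := by
  obtain ⟨n, x, t⟩ := p
  obtain ⟨n', x', t'⟩ := q
  dsimp only at θ h1 h2
  have e2 : t' = toTopMap (iemb t ≫ θ) (itop t) := by
    rw [toTopMap_comp_apply, toTopMap_iemb]
    exact h2
  have hcinj : Function.Injective (iemb t ≫ θ).toOrderHom := by
    intro i i' h
    rw [toOrderHom_comp_apply, toOrderHom_comp_apply] at h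
    exact iemb_injective t (hinj h)
  have h3 : mred (⟨n', x', t'⟩ : GeomRealPre W) = ⟨ik t, W.map (iemb t ≫ θ).op x', itop t⟩ :=
    mred_eq _ hcinj _ (itop_pos t) x' t' e2
  rw [h3]
  show (⟨ik t, W.map (iemb t).op x, itop t⟩ : GeomRealPre W) = _
  rw [wmap_comp_apply, ← h1]

lemma nf_of_epi {p q : GeomRealPre W} (θ : p.1 ⟶ q.1)
    (hs : Function.Surjective θ.toOrderHom)
    (h1 : p.2.1 = W.map θ.op q.2.1) (h2 : q.2.2 = toTopMap θ p.2.2) : nf p = nf q := by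
  obtain ⟨n, x, t⟩ := p
  obtain ⟨n', x', t'⟩ := q
  dsimp only at θ h1 h2
  set φ : ik t ⟶ n' := iemb t ≫ θ with hφ
  set e := Limits.factorThruImage φ with he
  set ii := Limits.image.ι φ with hii
  have hfac : e ≫ ii = φ := Limits.image.fac φ
  have hse : Function.Surjective e.toOrderHom := epi_iff_surjective.mp inferInstance
  have hsi : Function.Injective ii.toOrderHom := mono_iff_injective.mp inferInstance
  have hitpos : ∀ i, (toTopMap e (itop t)).1 i ≠ 0 := toTopMap_pos e hse _ (itop_pos t)
  have e2 : t' = toTopMap ii (toTopMap e (itop t)) := by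
    rw [← toTopMap_comp_apply, hfac, hφ, toTopMap_comp_apply, toTopMap_iemb]
    exact h2
  have h3 : mred (⟨n', x', t'⟩ : GeomRealPre W) = ⟨Limits.image φ, W.map ii.op x', toTopMap e (itop t)⟩ :=
    mred_eq _ hsi _ hitpos x' t' e2
  -- ez of the restricted simplex
  have hs0 := ez_surj (W.map ii.op x')
  have hy0 := ez_nondeg (W.map ii.op x')
  have he0 := ez_map (W.map ii.op x')
  rcases hq : ez (W.map ii.op x') with ⟨c, τ, yy⟩
  rw [hq] at hs0 hy0 he0
  dsimp only at hs0 hy0 he0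
  -- nf q
  have hnfq : nf (⟨n', x', t'⟩ : GeomRealPre W) = ⟨c, yy, toTopMap τ (toTopMap e (itop t))⟩ := by
    show ered (mred (⟨n', x', t'⟩ : GeomRealPre W)) = _
    rw [h3]
    exact ered_of hq
  -- nf p
  have hx : W.map (iemb t).op x = W.map (e ≫ τ).op yy := by
    rw [h1, ← wmap_comp_apply, ← hφ, wmap_comp_apply (φ := e) (ψ := τ), ← he0,
      ← wmap_comp_apply, hfac]
  have hsc : Function.Surjective (e ≫ τ).toOrderHom := by
    intro j
    obtain ⟨i', hi'⟩ := hs0 j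
    obtain ⟨i, hi⟩ := hse i'
    exact ⟨i, by rw [toOrderHom_comp_apply, hi, hi']⟩
  have hezp : ez (W.map (iemb t).op x) = ⟨c, e ≫ τ, yy⟩ := ez_unique _ _ _ hsc hy0 hx
  have hnfp : nf (⟨n, x, t⟩ : GeomRealPre W) = ⟨c, yy, toTopMap (e ≫ τ) (itop t)⟩ := by
    show ered (mred (⟨n, x, t⟩ : GeomRealPre W)) = _
    exact ered_of hezp
  rw [hnfp, hnfq, toTopMap_comp_apply]

lemma nf_rel {p q : GeomRealPre W} (h : GeomRealRel W p q) : nf p = nf q := by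
  obtain ⟨θ, h1, h2⟩ := h
  set e := Limits.factorThruImage θ with he
  set ii := Limits.image.ι θ with hii
  have hfac : e ≫ ii = θ := Limits.image.fac θ
  have hse : Function.Surjective e.toOrderHom := epi_iff_surjective.mp inferInstance
  have hsi : Function.Injective ii.toOrderHom := mono_iff_injective.mp inferInstance
  set w : GeomRealPre W := ⟨Limits.image θ, W.map ii.op q.2.1, toTopMap e p.2.2⟩ with hw
  have hA : nf p = nf w := by
    apply nf_of_epi (p := p) (q := w) e hse
    · show p.2.1 = W.map e.op (W.map ii.op q.2.1)
      rw [h1, ← wmap_comp_apply, hfac]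
    · rfl
  have hB : mred w = mred q := by
    apply mred_of_mono (p := w) (q := q) ii hsi
    · rfl
    · show q.2.2 = toTopMap ii (toTopMap e p.2.2)
      rw [← toTopMap_comp_apply, hfac]
      exact h2
  rw [hA]
  show ered (mred w) = ered (mred q)
  rw [hB]

lemma nf_eqvGen {p q : GeomRealPre W} (h : Relation.EqvGen (GeomRealRel W) p q) :
    nf p = nf q := by
  induction h with
  | rel _ _ h => exact nf_rel h
  | refl => rfl
  | symm _ _ _ ih => exact ih.symm
  | trans _ _ _ _ _ ih1 ih2 => exact ih1.trans ih2

lemma quot_mk_eq_iff (p q : GeomRealPre W) :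
    Quot.mk (GeomRealRel W) p = Quot.mk (GeomRealRel W) q ↔ nf p = nf q := by
  constructor
  · intro h
    exact nf_eqvGen (Quot.eq.mp h)
  · intro h
    have h1 := Quot.eqvGen_sound (eqvGen_nf p)
    have h2 := Quot.eqvGen_sound (eqvGen_nf q)
    rw [h1, h2, h]

lemma nf_idem (p : GeomRealPre W) : nf (nf p) = nf p := (nf_eqvGen (eqvGen_nf p)).symm

lemma wmap_surj_injective {a b : SimplexCategory} (τ : a ⟶ b)
    (hs : Function.Surjective τ.toOrderHom) :
    Function.Injective (fun z : W.obj (op b) => W.map τ.op z) := by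
  intro z z' h
  have h2 := congrArg (fun w => W.map (minSection τ hs).op w) h
  dsimp only at h2
  rw [← wmap_comp_apply, ← wmap_comp_apply, minSection_comp, wmap_id_apply, wmap_id_apply] at h2
  exact h2



instance toTopObjCompact (a : SimplexCategory) : CompactSpace a.toTopObj := by
  rw [← isCompact_iff_compactSpace]
  have hsub : (SimplexCategory.toTopObj a)
      ⊆ Set.univ.pi (fun _ => Set.Icc (0 : NNReal) 1) := by
    intro f hf i _
    refine Set.mem_Icc.mpr ⟨zero_le, ?_⟩
    have hsum : ∑ j, f j = 1 := hf
    rw [← hsum]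
    exact Finset.single_le_sum (fun j _ => zero_le) (Finset.mem_univ i)
  have hcl : IsClosed (SimplexCategory.toTopObj a) := by
    have h0 : SimplexCategory.toTopObj a
        = setOf (fun f : Fin (a.len + 1) → NNReal => ∑ j, f j = 1) := rfl
    rw [h0]
    exact isClosed_eq (continuous_finset_sum _ fun j _ => continuous_apply j) continuous_const
  exact (isCompact_univ_pi (fun _ => isCompact_Icc)).of_isClosed_subset hcl hsub


end GRAux


section GroupAction

variable {G : Type} [Group G] (W : SimplicialObject TopCat.{0})
  (ρ : G → (W ⟶ W)) (H : Subgroup G)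

/-- The levelwise `H`-fixed points of an action on a simplicial space. -/
def FixedSet (k : SimplexCategoryᵒᵖ) : Set (W.obj k) :=
  { x | ∀ g ∈ H, (ρ g).app k x = x }

lemma fixedSet_map {k l : SimplexCategoryᵒᵖ} (θ : k ⟶ l) {x : W.obj k}
    (hx : x ∈ FixedSet W ρ H k) : W.map θ x ∈ FixedSet W ρ H l := by
  intro g hg
  have h1 : (ρ g).app l (W.map θ x) = W.map θ ((ρ g).app k x) :=
    ConcreteCategory.congr_hom ((ρ g).naturality θ) x
  rw [h1, hx g hg]

/-- The simplicial space of levelwise `H`-fixed points `W^H`. -/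
def FixedComplex : SimplicialObject TopCat.{0} where
  obj k := TopCat.of ↥(FixedSet W ρ H k)
  map {k l} θ := TopCat.ofHom ⟨fun x => ⟨W.map θ x.1, fixedSet_map W ρ H θ x.2⟩,
    Continuous.subtype_mk ((W.map θ).hom.continuous.comp continuous_subtype_val) _⟩
  map_id k := by
    apply TopCat.ext
    rintro ⟨x, hx⟩
    apply Subtype.ext
    show W.map (𝟙 k) x = x
    rw [W.map_id]
    rfl
  map_comp {k l j} θ θ' := by
    apply TopCat.ext
    rintro ⟨x, hx⟩
    apply Subtype.ext
    show W.map (θ ≫ θ') x = W.map θ' (W.map θ x)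
    rw [W.map_comp]
    rfl

/-- The inclusion `W^H → W` of the levelwise fixed points. -/
def fixedInclusion : FixedComplex W ρ H ⟶ W where
  app k := TopCat.ofHom ⟨Subtype.val, continuous_subtype_val⟩
  naturality _ _ _ := rfl

lemma geomReal_map_fixed (p : GeomReal (FixedComplex W ρ H)) (g : G) (hg : g ∈ H) :
    GeomReal.map (ρ g) (GeomReal.map (fixedInclusion W ρ H) p) =
      GeomReal.map (fixedInclusion W ρ H) p := by
  induction p using Quot.ind with
  | _ q =>
    obtain ⟨n, z, t⟩ := q
    have h1 : GeomReal.map (fixedInclusion W ρ H) (Quot.mk _ ⟨n, (z, t)⟩) =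
        GeomReal.mk W z.1 t := rfl
    have h2 : GeomReal.map (ρ g) (GeomReal.mk W z.1 t) =
        GeomReal.mk W ((ρ g).app (op n) z.1) t := rfl
    rw [h1, h2, z.2 g hg]

section Transfer

open GRAux SimplexCategory

/-- The underlying point of `∐ (Wₙ)^H × Δⁿ` of a point of `∐ (Wₙ^H) × Δⁿ`. -/
def jPre (p : GeomRealPre (FixedComplex W ρ H)) : GeomRealPre W := ⟨p.1, p.2.1.1, p.2.2⟩

lemma map_fixedInclusion_mk (p : GeomRealPre (FixedComplex W ρ H)) :
    GeomReal.map (fixedInclusion W ρ H) (Quot.mk _ p) = Quot.mk _ (jPre W ρ H p) := rfl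

lemma jPre_injective : Function.Injective (jPre W ρ H) := by
  rintro ⟨n, z, t⟩ ⟨n', z', t'⟩ h
  injection h with h1 h2
  subst h1
  have h3 := eq_of_heq h2
  have h4 : z.1 = z'.1 := congrArg Prod.fst h3
  have h5 : t = t' := congrArg Prod.snd h3
  rw [show z = z' from Subtype.ext h4, h5]

lemma isDeg_of_val {nn : SimplexCategory} (z : (FixedComplex W ρ H).obj (op nn))
    (h : GRAux.IsDeg (W := W) z.1) : GRAux.IsDeg (W := FixedComplex W ρ H) z := by
  obtain ⟨c, τ, yw, hs, hlt, he⟩ := h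
  have hfix : yw ∈ FixedSet W ρ H (op c) := by
    intro g hg
    apply wmap_surj_injective (W := W) τ hs
    show W.map τ.op ((ρ g).app (op c) yw) = W.map τ.op yw
    have hnat : W.map τ.op ((ρ g).app (op c) yw) = (ρ g).app (op nn) (W.map τ.op yw) :=
      (ConcreteCategory.congr_hom ((ρ g).naturality τ.op) yw).symm
    rw [hnat, ← he, z.2 g hg, he]
  refine ⟨c, τ, ⟨yw, hfix⟩, hs, hlt, ?_⟩
  apply Subtype.ext
  exact he

lemma jPre_mred (p : GeomRealPre (FixedComplex W ρ H)) :
    jPre W ρ H (GRAux.mred p) = GRAux.mred (jPre W ρ H p) := rfl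

lemma jPre_ered (q : GeomRealPre (FixedComplex W ρ H)) :
    jPre W ρ H (GRAux.ered q) = GRAux.ered (jPre W ρ H q) := by
  have hs0 := GRAux.ez_surj (W := FixedComplex W ρ H) q.2.1
  have hy0 := GRAux.ez_nondeg (W := FixedComplex W ρ H) q.2.1
  have he0 := GRAux.ez_map (W := FixedComplex W ρ H) q.2.1
  rcases hq : GRAux.ez (W := FixedComplex W ρ H) q.2.1 with ⟨c, τ, y⟩
  rw [hq] at hs0 hy0 he0
  dsimp only at hs0 hy0 he0
  have hmap : (jPre W ρ H q).2.1 = W.map τ.op y.1 := congrArg Subtype.val he0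
  have hnd : ¬ GRAux.IsDeg (W := W) y.1 := fun h => hy0 (isDeg_of_val W ρ H y h)
  have hezW : GRAux.ez (W := W) (jPre W ρ H q).2.1 = ⟨c, τ, y.1⟩ :=
    GRAux.ez_unique _ _ _ hs0 hnd hmap
  rw [GRAux.ered_of hq, GRAux.ered_of hezW]
  rfl

lemma jPre_nf (p : GeomRealPre (FixedComplex W ρ H)) :
    jPre W ρ H (GRAux.nf p) = GRAux.nf (jPre W ρ H p) := by
  show jPre W ρ H (GRAux.ered (GRAux.mred p)) = GRAux.ered (GRAux.mred (jPre W ρ H p))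
  rw [jPre_ered, jPre_mred]

/-- The action of `g : G` on the total space `∐ Wₙ × Δⁿ`. -/
def gAct (g : G) (p : GeomRealPre W) : GeomRealPre W :=
  ⟨p.1, (ρ g).app (op p.1) p.2.1, p.2.2⟩

lemma map_rho_mk (g : G) (p : GeomRealPre W) :
    GeomReal.map (ρ g) (Quot.mk _ p) = Quot.mk _ (gAct W ρ g p) := rfl

variable (hone : ρ 1 = 𝟙 W) (hmul : ∀ g g' : G, ρ (g * g') = ρ g' ≫ ρ g)

include hone hmul in
lemma rho_inv_app (g : G) (k : SimplexCategoryᵒᵖ) (z : W.obj k) :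
    (ρ g⁻¹).app k ((ρ g).app k z) = z := by
  have h1 : ρ g ≫ ρ g⁻¹ = 𝟙 W := by rw [← hmul g⁻¹ g, inv_mul_cancel, hone]
  calc (ρ g⁻¹).app k ((ρ g).app k z) = ((ρ g ≫ ρ g⁻¹) : W ⟶ W).app k z := rfl
    _ = (𝟙 W : W ⟶ W).app k z := by rw [h1]
    _ = z := rfl

include hone hmul in
lemma isDeg_gAct {g : G} {nn : SimplexCategory} {x : W.obj (op nn)}
    (h : GRAux.IsDeg (W := W) ((ρ g).app (op nn) x)) : GRAux.IsDeg (W := W) x := by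
  obtain ⟨c, τ, yw, hs, hlt, he⟩ := h
  refine ⟨c, τ, (ρ g⁻¹).app (op c) yw, hs, hlt, ?_⟩
  have h1 : x = (ρ g⁻¹).app (op nn) ((ρ g).app (op nn) x) := (rho_inv_app W ρ hone hmul g _ x).symm
  rw [h1, he]
  exact ConcreteCategory.congr_hom ((ρ g⁻¹).naturality τ.op) yw

lemma mred_gAct (g : G) (p : GeomRealPre W) :
    GRAux.mred (gAct W ρ g p) = gAct W ρ g (GRAux.mred p) := by
  show (⟨GRAux.ik p.2.2, W.map (GRAux.iemb p.2.2).op ((ρ g).app (op p.1) p.2.1),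
      GRAux.itop p.2.2⟩ : GeomRealPre W)
    = ⟨GRAux.ik p.2.2, (ρ g).app (op (GRAux.ik p.2.2)) (W.map (GRAux.iemb p.2.2).op p.2.1),
      GRAux.itop p.2.2⟩
  rw [show W.map (GRAux.iemb p.2.2).op ((ρ g).app (op p.1) p.2.1)
      = (ρ g).app (op (GRAux.ik p.2.2)) (W.map (GRAux.iemb p.2.2).op p.2.1) from
    (ConcreteCategory.congr_hom ((ρ g).naturality (GRAux.iemb p.2.2).op) p.2.1).symm]

include hone hmul in
lemma ered_gAct (g : G) (q : GeomRealPre W) :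
    GRAux.ered (gAct W ρ g q) = gAct W ρ g (GRAux.ered q) := by
  have hs0 := GRAux.ez_surj (W := W) q.2.1
  have hy0 := GRAux.ez_nondeg (W := W) q.2.1
  have he0 := GRAux.ez_map (W := W) q.2.1
  rcases hq : GRAux.ez (W := W) q.2.1 with ⟨c, τ, y⟩
  rw [hq] at hs0 hy0 he0
  dsimp only at hs0 hy0 he0
  have hmap : (gAct W ρ g q).2.1 = W.map τ.op ((ρ g).app (op c) y) := by
    show (ρ g).app (op q.1) q.2.1 = _
    rw [he0]
    exact ConcreteCategory.congr_hom ((ρ g).naturality τ.op) y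
  have hnd : ¬ GRAux.IsDeg (W := W) ((ρ g).app (op c) y) := by
    intro h
    exact hy0 (by
      have := isDeg_gAct W ρ hone hmul (g := g) (x := y) h
      exact this)
  have hez : GRAux.ez (W := W) (gAct W ρ g q).2.1 = ⟨c, τ, (ρ g).app (op c) y⟩ :=
    GRAux.ez_unique _ _ _ hs0 hnd hmap
  rw [GRAux.ered_of hq, GRAux.ered_of hez]
  rfl

include hone hmul in
lemma nf_gAct (g : G) (p : GeomRealPre W) :
    GRAux.nf (gAct W ρ g p) = gAct W ρ g (GRAux.nf p) := by
  show GRAux.ered (GRAux.mred (gAct W ρ g p)) = gAct W ρ g (GRAux.ered (GRAux.mred p))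
  rw [mred_gAct, ered_gAct W ρ hone hmul]

end Transfer

section FixTop

open Topology GRAux SimplexCategory

variable (C : Set (GeomReal (FixedComplex W ρ H)))

lemma fixedSet_isClosed (hT2 : ∀ k : SimplexCategoryᵒᵖ, T2Space (W.obj k))
    (k : SimplexCategoryᵒᵖ) : IsClosed (FixedSet W ρ H k) := by
  haveI := hT2 k
  have h0 : FixedSet W ρ H k = ⋂ (g : G) (_ : g ∈ H), {x | (ρ g).app k x = x} := by
    ext x
    simp [FixedSet]
  rw [h0]
  exact isClosed_iInter fun g => isClosed_iInter fun _ =>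
    isClosed_eq ((ρ g).app k).hom.continuous continuous_id

/-- The trace at level `m` of the set of points of `∐ (Wₙ)^H × Δⁿ` lying over `C`. -/
def DmSet (m : SimplexCategory) : Set (W.obj (op m) × m.toTopObj) :=
  (fun zs : (FixedComplex W ρ H).obj (op m) × m.toTopObj => ((zs.1.1 : W.obj (op m)), zs.2)) ''
    {zs | (⟨m, zs⟩ : GeomRealPre (FixedComplex W ρ H)) ∈ Quot.mk _ ⁻¹' C}

lemma mem_dmSet_of_eq {c : SimplexCategory} {ys : W.obj (op c) × c.toTopObj}
    {q : GeomRealPre (FixedComplex W ρ H)} (hq : q ∈ Quot.mk _ ⁻¹' C)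
    (h : jPre W ρ H q = ⟨c, ys⟩) : ys ∈ DmSet W ρ H C c := by
  obtain ⟨m0, z, s⟩ := q
  injection h with h1 h2
  subst h1
  exact ⟨(z, s), hq, eq_of_heq h2⟩

lemma dmSet_isClosed (hT2 : ∀ k : SimplexCategoryᵒᵖ, T2Space (W.obj k)) (hC : IsClosed C)
    (m : SimplexCategory) : IsClosed (DmSet W ρ H C m) := by
  have hemb : IsClosedEmbedding
      (fun zs : (FixedComplex W ρ H).obj (op m) × m.toTopObj =>
        ((zs.1.1 : W.obj (op m)), zs.2)) := by
    have h1 : IsClosedEmbedding (Prod.map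
        (Subtype.val : {x // x ∈ FixedSet W ρ H (op m)} → W.obj (op m))
        (id : m.toTopObj → m.toTopObj)) := by
      refine IsClosedEmbedding.mk (Topology.IsEmbedding.prodMap Topology.IsEmbedding.subtypeVal
        Topology.IsEmbedding.id) ?_
      rw [Set.range_prodMap, Subtype.range_val, Set.range_id]
      exact (fixedSet_isClosed W ρ H hT2 (op m)).prod isClosed_univ
    exact h1
  have hDset : IsClosed (setOf fun zs : (FixedComplex W ρ H).obj (op m) × m.toTopObj =>
      (⟨m, zs⟩ : GeomRealPre (FixedComplex W ρ H)) ∈ Quot.mk _ ⁻¹' C) := by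
    have h2 : Continuous (fun zs : (FixedComplex W ρ H).obj (op m) × m.toTopObj =>
        (Quot.mk _ (⟨m, zs⟩ : GeomRealPre (FixedComplex W ρ H))
          : GeomReal (FixedComplex W ρ H))) :=
      continuous_quot_mk.comp continuous_sigmaMk
    exact hC.preimage h2
  exact hemb.isClosedMap _ hDset

/-- One closed piece of the saturation of the fixed part. -/
def Fset {n k m : SimplexCategory} (ι : k ⟶ n) (τ : k ⟶ m) :
    Set (W.obj (op n) × n.toTopObj) :=
  {xt | Function.Injective ι.toOrderHom ∧ ∃ hs : Function.Surjective τ.toOrderHom,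
    W.map τ.op (W.map (GRAux.minSection τ hs).op (W.map ι.op xt.1)) = W.map ι.op xt.1 ∧
    ∃ t0 : k.toTopObj, xt.2 = SimplexCategory.toTopMap ι t0 ∧
      (W.map (GRAux.minSection τ hs).op (W.map ι.op xt.1), SimplexCategory.toTopMap τ t0)
        ∈ DmSet W ρ H C m}

lemma fset_isClosed (hT2 : ∀ k : SimplexCategoryᵒᵖ, T2Space (W.obj k)) (hC : IsClosed C)
    {n k m : SimplexCategory} (ι : k ⟶ n) (τ : k ⟶ m) :
    IsClosed (Fset W ρ H C ι τ) := by
  by_cases hinj : Function.Injective ι.toOrderHom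
  case neg =>
    have h0 : Fset W ρ H C ι τ = ∅ := by
      ext xt
      simp [Fset, hinj]
    rw [h0]
    exact isClosed_empty
  by_cases hs : Function.Surjective τ.toOrderHom
  case neg =>
    have h0 : Fset W ρ H C ι τ = ∅ := by
      ext xt
      simp only [Fset, Set.mem_setOf_eq, Set.mem_empty_iff_false, iff_false, not_and]
      rintro - ⟨hs', -⟩
      exact hs hs'
    rw [h0]
    exact isClosed_empty
  have hG : IsClosed (setOf fun xt0 : W.obj (op n) × k.toTopObj =>
      W.map τ.op (W.map (GRAux.minSection τ hs).op (W.map ι.op xt0.1)) = W.map ι.op xt0.1 ∧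
      (W.map (GRAux.minSection τ hs).op (W.map ι.op xt0.1), SimplexCategory.toTopMap τ xt0.2)
        ∈ DmSet W ρ H C m) := by
    haveI := hT2 (op k)
    have hy : Continuous (fun xt0 : W.obj (op n) × k.toTopObj =>
        W.map (GRAux.minSection τ hs).op (W.map ι.op xt0.1)) :=
      (W.map (GRAux.minSection τ hs).op).hom.continuous.comp
        ((W.map ι.op).hom.continuous.comp continuous_fst)
    apply IsClosed.inter
    · exact isClosed_eq ((W.map τ.op).hom.continuous.comp hy)
        ((W.map ι.op).hom.continuous.comp continuous_fst)
    · exact (dmSet_isClosed W ρ H C hT2 hC m).preimage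
        (hy.prodMk ((GRAux.continuous_toTopMap' τ).comp continuous_snd))
  have himg : Fset W ρ H C ι τ = (Prod.map (id : W.obj (op n) → W.obj (op n))
      (SimplexCategory.toTopMap ι)) '' (setOf fun xt0 : W.obj (op n) × k.toTopObj =>
      W.map τ.op (W.map (GRAux.minSection τ hs).op (W.map ι.op xt0.1)) = W.map ι.op xt0.1 ∧
      (W.map (GRAux.minSection τ hs).op (W.map ι.op xt0.1), SimplexCategory.toTopMap τ xt0.2)
        ∈ DmSet W ρ H C m) := by
    ext xt
    constructor
    · rintro ⟨-, hs', h1, t0, ht, hmem⟩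
      refine ⟨(xt.1, t0), ⟨h1, hmem⟩, ?_⟩
      show (xt.1, SimplexCategory.toTopMap ι t0) = xt
      rw [← ht]
    · rintro ⟨⟨x1, t0⟩, ⟨h1, hmem⟩, heq⟩
      have heq' : (x1, SimplexCategory.toTopMap ι t0) = xt := heq
      rw [← heq']
      exact ⟨hinj, hs, h1, t0, rfl, hmem⟩
  rw [himg]
  exact ((isProperMap_id.prodMap
    ((GRAux.continuous_toTopMap' ι).isProperMap)).isClosedMap) _ hG

/-- The (finite) index type for the pieces of the saturation at level `n`. -/
def TIdx (n : SimplexCategory) : Type :=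
  Σ _km : {k : SimplexCategory // k.len ≤ n.len} × {m : SimplexCategory // m.len ≤ n.len},
    ((_km.1.1 : SimplexCategory) ⟶ n) × ((_km.1.1 : SimplexCategory) ⟶ (_km.2.1 : SimplexCategory))

instance (n : SimplexCategory) : Finite (TIdx n) := by
  unfold TIdx
  infer_instance

/-- The trace at level `n` of the saturation of the part of `∐ Wₙ × Δⁿ` lying over
the fixed part. -/
def TnSet (n : SimplexCategory) : Set (W.obj (op n) × n.toTopObj) :=
  ⋃ j : TIdx n, Fset W ρ H C j.2.1 j.2.2

lemma tnSet_isClosed (hT2 : ∀ k : SimplexCategoryᵒᵖ, T2Space (W.obj k)) (hC : IsClosed C)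
    (n : SimplexCategory) : IsClosed (TnSet W ρ H C n) :=
  isClosed_iUnion_of_finite fun j => fset_isClosed W ρ H C hT2 hC j.2.1 j.2.2

lemma mem_tnSet_iff (n : SimplexCategory) (x : W.obj (op n)) (t : n.toTopObj) :
    (x, t) ∈ TnSet W ρ H C n ↔
      ∃ d ∈ (Quot.mk _ ⁻¹' C : Set (GeomRealPre (FixedComplex W ρ H))),
        Quot.mk (GeomRealRel W) (jPre W ρ H d) = Quot.mk _ (⟨n, x, t⟩ : GeomRealPre W) := by
  constructor
  · intro hx
    obtain ⟨j, hmem⟩ := Set.mem_iUnion.mp hx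
    obtain ⟨hinj, hs, h1, t0, ht, hmem2⟩ := hmem
    obtain ⟨zs, hzs, heq⟩ := hmem2
    refine ⟨⟨(j.1.2.1 : SimplexCategory), zs⟩, hzs, ?_⟩
    have hz1 : zs.1.1 = W.map (GRAux.minSection j.2.2 hs).op (W.map j.2.1.op x) :=
      congrArg Prod.fst heq
    have hz2 : zs.2 = SimplexCategory.toTopMap j.2.2 t0 := congrArg Prod.snd heq
    have e1 : Quot.mk (GeomRealRel W)
        (⟨(j.1.2.1 : SimplexCategory), zs.1.1, zs.2⟩ : GeomRealPre W)
        = Quot.mk _ ⟨(j.1.2.1 : SimplexCategory),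
            W.map (GRAux.minSection j.2.2 hs).op (W.map j.2.1.op x),
            SimplexCategory.toTopMap j.2.2 t0⟩ := by
      rw [hz1, hz2]
    have r1 : GeomRealRel W
        (⟨(j.1.1.1 : SimplexCategory), W.map j.2.1.op x, t0⟩ : GeomRealPre W)
        ⟨(j.1.2.1 : SimplexCategory),
          W.map (GRAux.minSection j.2.2 hs).op (W.map j.2.1.op x),
          SimplexCategory.toTopMap j.2.2 t0⟩ := ⟨j.2.2, h1.symm, rfl⟩
    have r2 : GeomRealRel W
        (⟨(j.1.1.1 : SimplexCategory), W.map j.2.1.op x, t0⟩ : GeomRealPre W)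
        ⟨n, x, t⟩ := ⟨j.2.1, rfl, ht⟩
    exact e1.trans (((Quot.sound r1).symm).trans (Quot.sound r2))
  · rintro ⟨d, hd, hquot⟩
    have hnfeq : GRAux.nf (jPre W ρ H d) = GRAux.nf (⟨n, x, t⟩ : GeomRealPre W) :=
      (GRAux.quot_mk_eq_iff _ _).mp hquot
    have hj : jPre W ρ H (GRAux.nf d) = GRAux.nf (⟨n, x, t⟩ : GeomRealPre W) := by
      rw [jPre_nf]
      exact hnfeq
    have hd'D : GRAux.nf d ∈ (Quot.mk _ ⁻¹' C : Set (GeomRealPre (FixedComplex W ρ H))) := by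
      have : Quot.mk (GeomRealRel (FixedComplex W ρ H)) (GRAux.nf d) = Quot.mk _ d :=
        (Quot.eqvGen_sound (GRAux.eqvGen_nf d)).symm
      show _ ∈ C
      rw [this]
      exact hd
    have hs0 := GRAux.ez_surj (W := W) (W.map (GRAux.iemb t).op x)
    have he0 := GRAux.ez_map (W := W) (W.map (GRAux.iemb t).op x)
    rcases hez : GRAux.ez (W := W) (W.map (GRAux.iemb t).op x) with ⟨c, τ, y⟩
    rw [hez] at hs0 he0
    dsimp only at hs0 he0
    have hnf : GRAux.nf (⟨n, x, t⟩ : GeomRealPre W)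
        = ⟨c, y, SimplexCategory.toTopMap τ (GRAux.itop t)⟩ := by
      show GRAux.ered (GRAux.mred (⟨n, x, t⟩ : GeomRealPre W)) = _
      exact GRAux.ered_of hez
    have hklen : (GRAux.ik t).len ≤ n.len :=
      @len_le_of_mono _ _ (GRAux.iemb t) (mono_iff_injective.mpr (GRAux.iemb_injective t))
    have hclen : c.len ≤ n.len :=
      le_trans (@len_le_of_epi _ _ τ (epi_iff_surjective.mpr hs0)) hklen
    apply Set.mem_iUnion.mpr
    refine ⟨⟨⟨⟨GRAux.ik t, hklen⟩, ⟨c, hclen⟩⟩, GRAux.iemb t, τ⟩, ?_⟩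
    have hy' : W.map (GRAux.minSection τ hs0).op (W.map (GRAux.iemb t).op x) = y := by
      rw [he0, ← GRAux.wmap_comp_apply, GRAux.minSection_comp, GRAux.wmap_id_apply]
    refine ⟨GRAux.iemb_injective t, hs0, ?_, GRAux.itop t, (GRAux.toTopMap_iemb t).symm, ?_⟩
    · rw [hy']
      exact he0.symm
    · rw [hy']
      exact mem_dmSet_of_eq W ρ H C hd'D (hj.trans hnf)

lemma image_closed (hT2 : ∀ k : SimplexCategoryᵒᵖ, T2Space (W.obj k)) (hC : IsClosed C) :
    IsClosed (Quot.mk (GeomRealRel W) ''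
      (jPre W ρ H '' (Quot.mk _ ⁻¹' C))) := by
  rw [← isQuotientMap_quot_mk.isCoinducing.isClosed_preimage]
  have hpre : Quot.mk (GeomRealRel W) ⁻¹'
      (Quot.mk (GeomRealRel W) '' (jPre W ρ H '' (Quot.mk _ ⁻¹' C)))
      = (setOf fun p : GeomRealPre W => (p.2.1, p.2.2) ∈ TnSet W ρ H C p.1) := by
    ext p
    obtain ⟨n, x, t⟩ := p
    show (∃ w, (∃ d, d ∈ (Quot.mk _ ⁻¹' C : Set (GeomRealPre (FixedComplex W ρ H))) ∧
        jPre W ρ H d = w) ∧ Quot.mk (GeomRealRel W) w = Quot.mk _ (⟨n, x, t⟩ : GeomRealPre W)) ↔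
      (x, t) ∈ TnSet W ρ H C n
    rw [mem_tnSet_iff]
    constructor
    · rintro ⟨w, ⟨d, hd, rfl⟩, hw⟩
      exact ⟨d, hd, hw⟩
    · rintro ⟨d, hd, h⟩
      exact ⟨jPre W ρ H d, ⟨d, hd, rfl⟩, h⟩
  rw [hpre]
  apply isClosed_sigma_iff.mpr
  intro n
  have h0 : Sigma.mk n ⁻¹' (setOf fun p : GeomRealPre W => (p.2.1, p.2.2) ∈ TnSet W ρ H C p.1)
      = TnSet W ρ H C n := rfl
  change IsClosed (TnSet W ρ H C n)
  exact tnSet_isClosed W ρ H C hT2 hC n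

end FixTop

/-- If a finite group `G` acts on a simplicial space `W` (levelwise, commuting with all the
simplicial structure maps), each level `Wₙ` is Hausdorff, and `H ≤ G` is a subgroup, then
the natural map `|W^H| → |W|^H` from the realization of the levelwise fixed points to the
fixed points of the induced action on the realization is a homeomorphism. -/
theorem isHomeomorph_fixedPoints_realization
    [Finite G] (hT2 : ∀ k : SimplexCategoryᵒᵖ, T2Space (W.obj k))
    (hone : ρ 1 = 𝟙 W) (hmul : ∀ g g' : G, ρ (g * g') = ρ g' ≫ ρ g) :
    IsHomeomorph (fun p : GeomReal (FixedComplex W ρ H) =>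
      (⟨GeomReal.map (fixedInclusion W ρ H) p, fun g hg => geomReal_map_fixed W ρ H p g hg⟩ :
        { z : GeomReal W // ∀ g ∈ H, GeomReal.map (ρ g) z = z })) := by
  classical
  set F := (fun p : GeomReal (FixedComplex W ρ H) =>
      (⟨GeomReal.map (fixedInclusion W ρ H) p, fun g hg => geomReal_map_fixed W ρ H p g hg⟩ :
        { z : GeomReal W // ∀ g ∈ H, GeomReal.map (ρ g) z = z })) with hF
  have hinj : Function.Injective F := by
    intro a b
    induction a using Quot.ind with
    | _ pa =>
    induction b using Quot.ind with
    | _ pb =>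
    intro h
    have h3 : Quot.mk (GeomRealRel W) (jPre W ρ H pa)
        = Quot.mk (GeomRealRel W) (jPre W ρ H pb) := congrArg Subtype.val h
    apply (GRAux.quot_mk_eq_iff _ _).mpr
    apply jPre_injective W ρ H
    rw [jPre_nf, jPre_nf]
    exact (GRAux.quot_mk_eq_iff _ _).mp h3
  have hsurj : Function.Surjective F := by
    rintro ⟨z, hz⟩
    obtain ⟨p, rfl⟩ := Quot.exists_rep z
    have hfixq : ∀ g ∈ H, gAct W ρ g (GRAux.nf p) = GRAux.nf p := by
      intro g hg
      have h1 : Quot.mk (GeomRealRel W) (gAct W ρ g p) = Quot.mk _ p := hz g hg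
      have h2 := (GRAux.quot_mk_eq_iff _ _).mp h1
      rw [nf_gAct W ρ hone hmul] at h2
      exact h2
    have hfix2 : (GRAux.nf p).2.1 ∈ FixedSet W ρ H (op (GRAux.nf p).1) := by
      intro g hg
      have h3 : (⟨(GRAux.nf p).1, (ρ g).app (op (GRAux.nf p).1) (GRAux.nf p).2.1,
          (GRAux.nf p).2.2⟩ : GeomRealPre W)
          = ⟨(GRAux.nf p).1, (GRAux.nf p).2.1, (GRAux.nf p).2.2⟩ := hfixq g hg
      injection h3 with h4 h5
      exact congrArg Prod.fst h5
    refine ⟨Quot.mk _ ⟨(GRAux.nf p).1, ⟨(GRAux.nf p).2.1, hfix2⟩, (GRAux.nf p).2.2⟩, ?_⟩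
    apply Subtype.ext
    show GeomReal.map (fixedInclusion W ρ H) (Quot.mk _ _) = Quot.mk _ p
    show Quot.mk (GeomRealRel W) (GRAux.nf p) = Quot.mk _ p
    rw [GRAux.quot_mk_eq_iff, GRAux.nf_idem]
  have hclosed : IsClosedMap F := by
    intro C hC
    have himg : F '' C
        = Subtype.val ⁻¹' (Quot.mk (GeomRealRel W) ''
            (jPre W ρ H '' (Quot.mk _ ⁻¹' C))) := by
      ext z
      constructor
      · rintro ⟨c, hc, rfl⟩
        obtain ⟨pc, rfl⟩ := Quot.exists_rep c
        exact ⟨jPre W ρ H pc, ⟨pc, hc, rfl⟩, rfl⟩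
      · rintro ⟨w, ⟨pd, hpd, rfl⟩, hq⟩
        exact ⟨Quot.mk _ pd, hpd, Subtype.ext hq⟩
    rw [himg]
    exact (image_closed W ρ H C hT2 hC).preimage continuous_subtype_val
  refine IsHomeomorph.mk ?_ ?_ ⟨hinj, hsurj⟩
  · exact Continuous.subtype_mk (GeomReal.map (fixedInclusion W ρ H)).continuous _
  · intro U hU
    have h1 : F '' U = (F '' Uᶜ)ᶜ := by
      rw [Set.image_compl_eq ⟨hinj, hsurj⟩, compl_compl]
    rw [h1]
    exact (hclosed _ hU.isClosed_compl).isOpen_compl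

end GroupAction


end
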